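/- Let σ₁, σ₂, σ₃ be permutations of Fin 4. Let M be the free ℤ-module with basis H, E₁,…,E₄, P₁,…,P₄, Q₁,…,Q₄, and let f : M → M be the ℤ-linear map with f(H) = 3H − 2(P₁+…+P₄), f(Eᵢ) = H − Σ_{j ≠ i} P_{σ₁(j)}, f(Pᵢ) = Q_{σ₂(i)}, f(Qᵢ) = E_{σ₃(i)}. Define integer sequences by d₀ = 1, f₀ = b₀ = c₀ = 0 and dₙ = 3d_{n−1} − 4f_{n−1}, fₙ = c_{n−1}, bₙ = 2d_{n−1} − 3f_{n−1}, cₙ = b_{n−1}. Then for every natural number n, fⁿ(H) = dₙ·H − fₙ·(E₁+…+E₄) − bₙ·(P₁+…+P₄) − cₙ·(Q₁+…+Q₄). -/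
import Mathlib


noncomputable section

/-- Index type for the basis `H, E₁,…,E₄, P₁,…,P₄, Q₁,…,Q₄`. -/
abbrev IdxC := Unit ⊕ Fin 4 ⊕ Fin 4 ⊕ Fin 4

/-- The free ℤ-module with basis `H, E₁,…,E₄, P₁,…,P₄, Q₁,…,Q₄`. -/
abbrev ModC := IdxC → ℤ

/-- The basis vector `H` (pullback of the hyperplane class). -/
def Hc : ModC := Pi.single (Sum.inl ()) 1

/-- The basis vectors `Eᵢ` (exceptional divisors over the coordinate points `eᵢ`). -/
def Ec (i : Fin 4) : ModC := Pi.single (Sum.inr (Sum.inl i)) 1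

/-- The basis vectors `Pᵢ` (exceptional divisors over the points `pᵢ`). -/
def Pc (i : Fin 4) : ModC := Pi.single (Sum.inr (Sum.inr (Sum.inl i))) 1

/-- The basis vectors `Qᵢ` (exceptional divisors over the points `qᵢ`). -/
def Qc (i : Fin 4) : ModC := Pi.single (Sum.inr (Sum.inr (Sum.inr i))) 1

/-- The action on cohomology of a map `Φ = g∘crem₃` with `g` of type (C): for every `n`,
`fⁿ(H) = dₙH − fₙ(E₁+⋯+E₄) − bₙ(P₁+⋯+P₄) − cₙ(Q₁+⋯+Q₄)` where the coefficients satisfy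
the stated system of difference equations. -/
theorem typeC_degree_growth (σ₁ σ₂ σ₃ : Equiv.Perm (Fin 4)) (f : Module.End ℤ ModC)
    (hH : f Hc = 3 • Hc - 2 • ∑ j : Fin 4, Pc j)
    (hE : ∀ i : Fin 4, f (Ec i) = Hc - ∑ j ∈ Finset.univ.filter (· ≠ i), Pc (σ₁ j))
    (hP : ∀ i : Fin 4, f (Pc i) = Qc (σ₂ i))
    (hQ : ∀ i : Fin 4, f (Qc i) = Ec (σ₃ i))
    (d fs b c : ℕ → ℤ)
    (hd0 : d 0 = 1) (hf0 : fs 0 = 0) (hb0 : b 0 = 0) (hc0 : c 0 = 0)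
    (hd : ∀ n : ℕ, d (n + 1) = 3 * d n - 4 * fs n)
    (hf : ∀ n : ℕ, fs (n + 1) = c n)
    (hb : ∀ n : ℕ, b (n + 1) = 2 * d n - 3 * fs n)
    (hc : ∀ n : ℕ, c (n + 1) = b n) :
    ∀ n : ℕ, (f ^ n) Hc =
      d n • Hc - fs n • ∑ j : Fin 4, Ec j - b n • ∑ j : Fin 4, Pc j
        - c n • ∑ j : Fin 4, Qc j := by
  have hSE : f (∑ j : Fin 4, Ec j) = 4 • Hc - 3 • ∑ j : Fin 4, Pc j := by
    rw [map_sum]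
    have h1 : ∀ i : Fin 4, f (Ec i) = Hc - ((∑ j : Fin 4, Pc j) - Pc (σ₁ i)) := by
      intro i
      rw [hE i, Finset.filter_ne', Finset.sum_erase_eq_sub (Finset.mem_univ i),
        Equiv.sum_comp σ₁ Pc]
    simp only [h1]
    rw [Finset.sum_sub_distrib, Finset.sum_sub_distrib, Equiv.sum_comp σ₁ Pc]
    simp only [Finset.sum_const, Finset.card_univ, Fintype.card_fin]
    module
  have hSP : f (∑ j : Fin 4, Pc j) = ∑ j : Fin 4, Qc j := by
    rw [map_sum]; simp only [hP]; exact Equiv.sum_comp σ₂ Qc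
  have hSQ : f (∑ j : Fin 4, Qc j) = ∑ j : Fin 4, Ec j := by
    rw [map_sum]; simp only [hQ]; exact Equiv.sum_comp σ₃ Ec
  intro n
  induction n with
  | zero => simp [hd0, hf0, hb0, hc0]
  | succ n ih =>
    rw [pow_succ', Module.End.mul_apply, ih, map_sub, map_sub, map_sub,
      map_zsmul, map_zsmul, map_zsmul, map_zsmul, hH, hSE, hSP, hSQ,
      hd n, hf n, hb n, hc n]
    module
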